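/- For an integer m ≥ 3, let Ω denote the m × m real matrix with rows and columns indexed by 0, 1, …, m−1, whose entries are: Ω(0,1) = 2; Ω(i,j) = 1 whenever |i − j| = 1 and (i,j) ≠ (0,1); Ω(m−1,0) = 1; and all other entries equal 0. If m is even (so m ≥ 4), then for every t ∈ ℝ the (0,0) entry of the matrix exponential exp(tΩ) equals (1/m)·( e^{2t} + e^{−2t} + 2·Σ_{q=1}^{(m−2)/2} e^{2t·cos(2πq/m)} ). -/

import Mathlib

open scoped BigOperators

/-- The `m × m` comparison matrix `Ω`: `Ω 0 1 = 2`, `Ω i j = 1` when `|i − j| = 1`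
and `(i,j) ≠ (0,1)`, `Ω (m−1) 0 = 1`, all other entries `0`. -/
def OmegaMat (m : ℕ) : Matrix (Fin m) (Fin m) ℝ := fun i j =>
  if i.val = 0 ∧ j.val = 1 then 2
  else if i.val + 1 = j.val ∨ j.val + 1 = i.val then 1
  else if i.val = m - 1 ∧ j.val = 0 then 1
  else 0

open Matrix

lemma exp_mulVec_eigen {m : ℕ} (A : Matrix (Fin m) (Fin m) ℝ) (v : Fin m → ℝ) (μ : ℝ)
    (h : A *ᵥ v = μ • v) :
    (NormedSpace.exp A) *ᵥ v = Real.exp μ • v := by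
  letI : SeminormedRing (Matrix (Fin m) (Fin m) ℝ) := Matrix.linftyOpSemiNormedRing
  letI : NormedRing (Matrix (Fin m) (Fin m) ℝ) := Matrix.linftyOpNormedRing
  letI : NormedAlgebra ℝ (Matrix (Fin m) (Fin m) ℝ) := Matrix.linftyOpNormedAlgebra
  have hpow : ∀ n : ℕ, (A ^ n) *ᵥ v = (μ ^ n) • v := by
    intro n
    induction n with
    | zero => simp
    | succ n ih =>
        rw [pow_succ, ← Matrix.mulVec_mulVec, h, Matrix.mulVec_smul, ih, smul_smul, pow_succ,
          mul_comm]
  have hs : Summable (fun n : ℕ => ((n.factorial : ℝ))⁻¹ • A ^ n) :=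
    NormedSpace.expSeries_summable' A
  let L : Matrix (Fin m) (Fin m) ℝ →ₗ[ℝ] (Fin m → ℝ) :=
    { toFun := fun M => M *ᵥ v
      map_add' := fun M N => Matrix.add_mulVec M N v
      map_smul' := fun c M => Matrix.smul_mulVec c M v }
  have hL : (NormedSpace.exp A) *ᵥ v
      = ∑' n : ℕ, (((n.factorial : ℝ))⁻¹ • A ^ n) *ᵥ v := by
    rw [NormedSpace.exp_eq_tsum ℝ]
    exact (L.toContinuousLinearMap : Matrix (Fin m) (Fin m) ℝ →L[ℝ] (Fin m → ℝ)).map_tsum hs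
  rw [hL]
  have : ∀ n : ℕ, (((n.factorial : ℝ))⁻¹ • A ^ n) *ᵥ v
      = (((n.factorial : ℝ))⁻¹ * μ ^ n) • v := by
    intro n
    rw [Matrix.smul_mulVec, hpow, smul_smul]
  simp_rw [this]
  rw [Summable.tsum_smul_const, Real.exp_eq_exp_ℝ, NormedSpace.exp_eq_tsum ℝ]
  · norm_num
  · have := NormedSpace.expSeries_summable' (𝕂 := ℝ) μ
    simpa [smul_eq_mul] using this

lemma omega_two {m : ℕ} {i j : Fin m} (h1 : i.val = 0) (h2 : j.val = 1) :
    OmegaMat m i j = 2 := by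
  simp [OmegaMat, h1, h2]

lemma omega_one {m : ℕ} {i j : Fin m} (hne : ¬(i.val = 0 ∧ j.val = 1))
    (h : i.val + 1 = j.val ∨ j.val + 1 = i.val) : OmegaMat m i j = 1 := by
  simp only [OmegaMat, if_neg hne, if_pos h]

lemma omega_one' {m : ℕ} {i j : Fin m} (hm : 3 ≤ m) (hi : i.val = m - 1) (hj : j.val = 0) :
    OmegaMat m i j = 1 := by
  have : ¬(i.val = 0 ∧ j.val = 1) := by omega
  have h2 : ¬(i.val + 1 = j.val ∨ j.val + 1 = i.val) := by omega
  simp only [OmegaMat, if_neg this, if_neg h2, if_pos (And.intro hi hj)]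

lemma omega_zero {m : ℕ} {i j : Fin m} (h1 : ¬(i.val = 0 ∧ j.val = 1))
    (h2 : ¬(i.val + 1 = j.val ∨ j.val + 1 = i.val))
    (h3 : ¬(i.val = m - 1 ∧ j.val = 0)) : OmegaMat m i j = 0 := by
  simp only [OmegaMat, if_neg h1, if_neg h2, if_neg h3]

set_option linter.unreachableTactic false in
set_option linter.unusedTactic false in
lemma omega_eigen (m q : ℕ) (hm : 3 ≤ m) :
    (OmegaMat m) *ᵥ (fun k : Fin m => Real.cos (2 * Real.pi * q / m * k)) =
      (2 * Real.cos (2 * Real.pi * q / m)) •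
        (fun k : Fin m => Real.cos (2 * Real.pi * q / m * k)) := by
  have hm0 : (m : ℝ) ≠ 0 := by positivity
  set θ : ℝ := 2 * Real.pi * q / m with hθ
  funext i
  simp only [Matrix.mulVec, dotProduct, Pi.smul_apply, smul_eq_mul]
  have hilt := i.isLt
  by_cases h0 : i.val = 0
  · rw [Finset.sum_eq_single (⟨1, by omega⟩ : Fin m)]
    · rw [omega_two h0 rfl]
      simp only [Fin.val_mk, h0, Nat.cast_one, Nat.cast_zero, mul_one, mul_zero,
        Real.cos_zero]
    · intro b _ hb
      have hb1 : b.val ≠ 1 := by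
        intro h; exact hb (by apply Fin.ext; simp only [Fin.val_mk]; exact h)
      have := b.isLt
      rw [omega_zero (by omega) (by omega) (by omega), zero_mul]
    · intro h; exact absurd (Finset.mem_univ _) h
  · by_cases h1 : i.val = m - 1
    · rw [Finset.sum_eq_add_of_mem (⟨m-2, by omega⟩ : Fin m) (⟨0, by omega⟩ : Fin m)
        (Finset.mem_univ _) (Finset.mem_univ _)
        (by intro h; have := congrArg Fin.val h; simp only [Fin.val_mk] at this; omega)]
      · rw [omega_one (i := i) (j := ⟨m-2, by omega⟩)
            (by simp only [Fin.val_mk]; first | exact Or.inl trivial | trivial | omega)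
            (by simp only [Fin.val_mk]; first | exact Or.inl trivial | trivial | omega),
          omega_one' hm h1 rfl, one_mul, one_mul]
        simp only [Fin.val_mk, Nat.cast_zero, mul_zero, Real.cos_zero]
        have c2 : ((m - 2 : ℕ) : ℝ) = (m : ℝ) - 2 := by
          have : (2:ℕ) ≤ m := by omega
          push_cast [this]; ring
        have c1 : ((i.val : ℕ) : ℝ) = (m : ℝ) - 1 := by
          rw [h1]
          have : (1:ℕ) ≤ m := by omega
          push_cast [this]; ring
        rw [c2, c1]
        have r2 : θ * ((m:ℝ) - 2) = (q : ℝ) * (2 * Real.pi) - 2 * θ := by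
          rw [hθ]; field_simp
        have r1 : θ * ((m:ℝ) - 1) = (q : ℝ) * (2 * Real.pi) - θ := by
          rw [hθ]; field_simp
        rw [r2, r1, Real.cos_nat_mul_two_pi_sub, Real.cos_nat_mul_two_pi_sub,
          Real.cos_two_mul]
        ring
      · intro c _ hc
        have hc1 : c.val ≠ m - 2 := by
          intro h; exact hc.1 (by apply Fin.ext; simp only [Fin.val_mk]; exact h)
        have hc2 : c.val ≠ 0 := by
          intro h; exact hc.2 (by apply Fin.ext; simp only [Fin.val_mk]; exact h)
        have := c.isLt
        rw [omega_zero (by omega) (by omega) (by omega), zero_mul]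
    · have hi1 : 1 ≤ i.val := by omega
      have hi2 : i.val ≤ m - 2 := by omega
      rw [Finset.sum_eq_add_of_mem (⟨i.val - 1, by omega⟩ : Fin m) (⟨i.val + 1, by omega⟩ : Fin m)
        (Finset.mem_univ _) (Finset.mem_univ _)
        (by intro h; have := congrArg Fin.val h; simp only [Fin.val_mk] at this; omega)]
      · rw [omega_one (i := i) (j := ⟨i.val - 1, by omega⟩)
            (by simp only [Fin.val_mk]; first | exact Or.inl trivial | trivial | omega)
            (by simp only [Fin.val_mk]; first | exact Or.inl trivial | trivial | omega),
          omega_one (i := i) (j := ⟨i.val + 1, by omega⟩)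
            (by simp only [Fin.val_mk]; first | exact Or.inl trivial | trivial | omega)
            (by simp only [Fin.val_mk]; first | exact Or.inl trivial | trivial | omega),
          one_mul, one_mul]
        simp only [Fin.val_mk]
        have c1 : ((i.val - 1 : ℕ) : ℝ) = (i.val : ℝ) - 1 := by
          push_cast [hi1]; ring
        rw [c1]
        push_cast
        rw [show θ * ((i.val:ℝ) - 1) = θ * i.val - θ by ring,
          show θ * ((i.val:ℝ) + 1) = θ * i.val + θ by ring,
          Real.cos_sub, Real.cos_add]
        ring
      · intro c _ hc
        have hc1 : c.val ≠ i.val - 1 := by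
          intro h; exact hc.1 (by apply Fin.ext; simp only [Fin.val_mk]; exact h)
        have hc2 : c.val ≠ i.val + 1 := by
          intro h; exact hc.2 (by apply Fin.ext; simp only [Fin.val_mk]; exact h)
        have := c.isLt
        rw [omega_zero (by omega) (by omega) (by omega), zero_mul]

lemma sum_cos_delta (m : ℕ) (hm : 0 < m) (k : ℕ) (hk : k < m) :
    ∑ q ∈ Finset.range m, Real.cos (2 * Real.pi * q / m * k)
      = if k = 0 then (m : ℝ) else 0 := by
  have hm0 : (m : ℝ) ≠ 0 := Nat.cast_ne_zero.mpr hm.ne'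
  have hmc : (m : ℂ) ≠ 0 := Nat.cast_ne_zero.mpr hm.ne'
  by_cases hk0 : k = 0
  · subst hk0
    simp [Real.cos_zero]
  · rw [if_neg hk0]
    set ζ : ℂ := Complex.exp ((2 * Real.pi * k / m : ℝ) * Complex.I) with hζ
    have hq : ∀ q : ℕ, Real.cos (2 * Real.pi * q / m * k) = (ζ ^ q).re := by
      intro q
      rw [hζ, ← Complex.exp_nat_mul]
      have : (q : ℂ) * (((2 * Real.pi * k / m : ℝ) : ℂ) * Complex.I)
          = ((2 * Real.pi * q / m * k : ℝ) : ℂ) * Complex.I := by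
        push_cast; ring
      rw [this, Complex.exp_ofReal_mul_I_re]
    simp_rw [hq]
    rw [← Complex.re_sum]
    have hζm : ζ ^ m = 1 := by
      rw [hζ, ← Complex.exp_nat_mul]
      have : (m : ℂ) * (((2 * Real.pi * k / m : ℝ) : ℂ) * Complex.I)
          = (k : ℂ) * (2 * Real.pi * Complex.I) := by
        push_cast
        field_simp
      rw [this]
      exact Complex.exp_int_mul_two_pi_mul_I k
    have hζ1 : ζ ≠ 1 := by
      intro h
      have hre : Real.cos (2 * Real.pi * k / m) = 1 := by
        have := congrArg Complex.re h
        rwa [hζ, Complex.exp_ofReal_mul_I_re] at this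
      rw [Real.cos_eq_one_iff] at hre
      obtain ⟨n, hn⟩ := hre
      have hmk : (n : ℝ) * m = k := by
        field_simp at hn
        nlinarith [Real.pi_pos, hn]
      have : (n * m : ℤ) = (k : ℤ) := by exact_mod_cast hmk
      have hk1 : 1 ≤ k := Nat.pos_of_ne_zero hk0
      have : 0 < n := by
        by_contra hn'
        push_neg at hn'
        nlinarith [this, Int.natCast_pos.mpr hm]
      nlinarith [this]
    rw [geom_sum_eq hζ1, hζm]
    simp

/-- For even `m` (with `m ≥ 3`, so `m ≥ 4`), the `(0,0)` entry of
`exp(tΩ)` equals `(1/m)·(e^{2t} + e^{−2t} + 2·Σ_{q=1}^{(m−2)/2} e^{2t·cos(2πq/m)})`. -/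
theorem stmt8 (m : ℕ) (hm : 3 ≤ m) (heven : Even m) (t : ℝ) :
    (NormedSpace.exp (t • OmegaMat m)) ⟨0, by omega⟩ ⟨0, by omega⟩ =
      (1 / (m : ℝ)) * (Real.exp (2 * t) + Real.exp (-2 * t) +
        2 * ∑ q ∈ Finset.Icc 1 ((m - 2) / 2),
          Real.exp (2 * t * Real.cos (2 * Real.pi * q / m))) := by
  obtain ⟨k, hk⟩ := heven
  have hk2 : 2 ≤ k := by omega
  have hm0 : (m : ℝ) ≠ 0 := by positivity
  have hmpos : 0 < m := by omega
  set z : Fin m := ⟨0, by omega⟩ with hz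
  set w : ℕ → Fin m → ℝ := fun q => (fun j : Fin m => Real.cos (2 * Real.pi * q / m * j))
    with hw
  set g : ℕ → ℝ := fun q => Real.exp (2 * t * Real.cos (2 * Real.pi * q / m)) with hg
  -- the eigenvalue relation for t • Ω
  have hexp : ∀ q : ℕ, (NormedSpace.exp (t • OmegaMat m)) *ᵥ w q = g q • w q := by
    intro q
    have heig : (t • OmegaMat m) *ᵥ w q
        = (2 * t * Real.cos (2 * Real.pi * q / m)) • w q := by
      rw [Matrix.smul_mulVec, hw]
      rw [omega_eigen m q hm, smul_smul,
        show t * (2 * Real.cos (2 * Real.pi * q / m))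
          = 2 * t * Real.cos (2 * Real.pi * q / m) from by ring]
    exact exp_mulVec_eigen _ _ _ heig
  -- the sum of eigenvectors is m • δ₀
  have hsum_vec : ∑ q ∈ Finset.range m, w q = (m : ℝ) • (Pi.single z 1 : Fin m → ℝ) := by
    funext j
    rw [Finset.sum_apply]
    have := sum_cos_delta m hmpos j.val j.isLt
    simp only [hw] at this ⊢
    rw [this]
    simp only [Pi.smul_apply, smul_eq_mul]
    by_cases hj : j = z
    · rw [if_pos (by simp [hj, hz]), hj, Pi.single_eq_same, mul_one]
    · rw [if_neg (by intro h; exact hj (Fin.ext (by simp [hz, h]))),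
        Pi.single_eq_of_ne hj, mul_zero]
  -- apply exp to both sides
  have hmain : (m : ℝ) * ((NormedSpace.exp (t • OmegaMat m)) z z)
      = ∑ q ∈ Finset.range m, g q := by
    have h1 : (NormedSpace.exp (t • OmegaMat m)) *ᵥ (∑ q ∈ Finset.range m, w q)
        = ∑ q ∈ Finset.range m, g q • w q := by
      simp only [← Matrix.mulVecLin_apply, map_sum]
      simp only [Matrix.mulVecLin_apply]
      exact Finset.sum_congr rfl fun q _ => hexp q
    rw [hsum_vec, Matrix.mulVec_smul, Matrix.mulVec_single] at h1
    have := congrFun h1 z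
    simp only [Pi.smul_apply, smul_eq_mul, op_smul_eq_mul, Matrix.col_apply, mul_one, Finset.sum_apply] at this
    rw [this]
    apply Finset.sum_congr rfl
    intro q _
    have : w q z = 1 := by
      simp only [hw, hz]
      norm_num
    rw [this, mul_one]
  -- reorganize the sum over range m
  have hgsym : ∀ a : ℕ, 1 ≤ a → a ≤ m - 1 → g a = g (m - a) := by
    intro a h1 h2
    simp only [hg]
    congr 1
    have hc : ((m - a : ℕ) : ℝ) = (m : ℝ) - a := by
      have : a ≤ m := by omega
      push_cast [this]; ring
    rw [hc]
    have : 2 * Real.pi * ((m:ℝ) - a) / m = 2 * Real.pi - 2 * Real.pi * a / m := by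
      field_simp
    rw [this, Real.cos_two_pi_sub]
  have hsplit : ∑ q ∈ Finset.range m, g q
      = g 0 + g k + 2 * ∑ q ∈ Finset.Icc 1 (k-1), g q := by
    have hset : Finset.range m
        = insert 0 (insert k ((Finset.Icc 1 (k-1)) ∪ (Finset.Icc (k+1) (m-1)))) := by
      ext x
      simp only [Finset.mem_range, Finset.mem_insert, Finset.mem_union, Finset.mem_Icc]
      omega
    rw [hset, Finset.sum_insert (by
        simp only [Finset.mem_insert, Finset.mem_union, Finset.mem_Icc]; omega),
      Finset.sum_insert (by
        simp only [Finset.mem_union, Finset.mem_Icc]; omega),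
      Finset.sum_union (by
        rw [Finset.disjoint_left]
        intro a ha hb
        simp only [Finset.mem_Icc] at ha hb
        omega)]
    have hrefl : ∑ q ∈ Finset.Icc (k+1) (m-1), g q = ∑ q ∈ Finset.Icc 1 (k-1), g q := by
      apply Finset.sum_nbij' (i := fun q => m - q) (j := fun q => m - q)
      · intro a ha
        simp only [Finset.mem_Icc] at ha ⊢
        omega
      · intro a ha
        simp only [Finset.mem_Icc] at ha ⊢
        omega
      · intro a ha
        simp only [Finset.mem_Icc] at ha
        omega
      · intro a ha
        simp only [Finset.mem_Icc] at ha
        omega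
      · intro a ha
        simp only [Finset.mem_Icc] at ha
        exact hgsym a (by omega) (by omega)
    rw [hrefl]
    ring
  -- final numerical identifications
  have hg0 : g 0 = Real.exp (2 * t) := by
    simp only [hg]
    norm_num
  have hgk : g k = Real.exp (-2 * t) := by
    simp only [hg]
    congr 1
    have : 2 * Real.pi * (k:ℝ) / m = Real.pi := by
      rw [hk]
      have : ((k + k : ℕ) : ℝ) = 2 * k := by push_cast; ring
      rw [this]
      have hk0 : (k : ℝ) ≠ 0 := by
        have : 0 < k := by omega
        positivity
      field_simp
    rw [this, Real.cos_pi]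
    ring
  have hIcc : Finset.Icc 1 ((m - 2) / 2) = Finset.Icc 1 (k - 1) := by
    congr 1
    omega
  have hgoal : (NormedSpace.exp (t • OmegaMat m)) z z
      = (1 / (m : ℝ)) * (∑ q ∈ Finset.range m, g q) := by
    rw [← hmain]
    field_simp
  rw [hgoal, hsplit, hg0, hgk, hIcc]
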